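/- (Theorem 4: one state separable.) Let d ≥ 1, let ρ₁, ρ₂ be density matrices on ℂ^d, let p₁, p₂ ≥ 0 with p₁ + p₂ = 1, let R₁ ≥ 0, and define σ₁ := (1+R₁)⁻¹ · (ρ₁ + (R₁/d) · I). Then ‖p₁·ρ₁ − p₂·ρ₂‖₁ − ‖p₁·σ₁ − p₂·ρ₂‖₁ ≥ (R₁/(1+R₁)) · (‖p₁·ρ₁ − p₂·ρ₂‖₁ − 1). Equivalently, the difference between the Helstrom success probability (1 + ‖p₁ρ₁ − p₂ρ₂‖₁)/2 for the pair (ρ₁, ρ₂) and the Helstrom success probability (1 + ‖p₁σ₁ − p₂ρ₂‖₁)/2 for the pair (σ₁, ρ₂) is at least (R₁/2)·(1+R₁)⁻¹·(‖p₁ρ₁ − p₂ρ₂‖₁ − 1). -/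

import Mathlib

open Matrix
open scoped ComplexOrder

/-- A density matrix: positive semidefinite with unit trace. -/
def IsDensityMatrix {n : Type*} [Fintype n] [DecidableEq n] (ρ : Matrix n n ℂ) : Prop :=
  ρ.PosSemidef ∧ ρ.trace = 1

/-- The trace norm of a complex matrix: the trace of the positive semidefinite
square root of `Aᴴ * A`. -/
noncomputable def traceNorm {n : Type*} [Fintype n] [DecidableEq n]
    (A : Matrix n n ℂ) : ℝ :=
  (((Matrix.posSemidef_conjTranspose_mul_self A).1.eigenvectorUnitary : Matrix n n ℂ) *
      diagonal (((↑) : ℝ → ℂ) ∘ Real.sqrt ∘ (Matrix.posSemidef_conjTranspose_mul_self A).1.eigenvalues) *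
      (star (Matrix.posSemidef_conjTranspose_mul_self A).1.eigenvectorUnitary : Matrix n n ℂ)).trace.re

variable {n : Type*} [Fintype n] [DecidableEq n]

set_option linter.unusedSectionVars false

open scoped MatrixOrder in
lemma traceNorm_eq_of_sq_eq {A B : Matrix n n ℂ} (hB : B.PosSemidef)
    (h : B ^ 2 = Aᴴ * A) : traceNorm A = B.trace.re := by
  unfold traceNorm
  have hAA := posSemidef_conjTranspose_mul_self A
  have key : CFC.sqrt (Aᴴ * A) = B := CFC.sqrt_unique (by rw [← sq]; exact h) hB.nonneg
  rw [CFC.sqrt_eq_cfc, cfc_nnreal_eq_real _ (Aᴴ * A), hAA.1.cfc_eq, IsHermitian.cfc,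
    Unitary.conjStarAlgAut_apply] at key
  rw [← key]
  congr 4
  congr 1
  funext i
  simp [Real.coe_sqrt, Real.coe_toNNReal', hAA.eigenvalues_nonneg i]

open scoped MatrixOrder in
lemma traceNorm_eq_sqrt (A : Matrix n n ℂ) : traceNorm A = (CFC.sqrt (Aᴴ * A)).trace.re :=
  traceNorm_eq_of_sq_eq (CFC.sqrt_nonneg _).posSemidef
    (CFC.sq_sqrt _ (posSemidef_conjTranspose_mul_self A).nonneg)

lemma traceNorm_of_posSemidef {A : Matrix n n ℂ} (hA : A.PosSemidef) :
    traceNorm A = A.trace.re :=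
  traceNorm_eq_of_sq_eq hA (by rw [pow_two, hA.isHermitian.eq])

lemma posSemidef_real_smul {A : Matrix n n ℂ} (hA : A.PosSemidef) {c : ℝ} (hc : 0 ≤ c) :
    ((c : ℂ) • A).PosSemidef := by
  constructor
  · show _ᴴ = _
    rw [conjTranspose_smul, hA.isHermitian.eq]
    congr 1
    simp [Complex.star_def, Complex.conj_ofReal]
  · intro x
    exact (hA.smul (show (0:ℂ) ≤ c by exact_mod_cast hc)).2 x

lemma traceNorm_smul {A : Matrix n n ℂ} (c : ℝ) (hc : 0 ≤ c) :
    traceNorm ((c : ℂ) • A) = c * traceNorm A := by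
  open scoped MatrixOrder in
  have hS := (CFC.sqrt_nonneg (Aᴴ * A)).posSemidef
  open scoped MatrixOrder in
  have h : ((c:ℂ) • CFC.sqrt (Aᴴ * A)) ^ 2 = ((c:ℂ) • A)ᴴ * ((c:ℂ) • A) := by
    rw [conjTranspose_smul, smul_pow, pow_two, smul_mul_assoc, mul_smul_comm,
      CFC.sq_sqrt _ (posSemidef_conjTranspose_mul_self A).nonneg, smul_smul]
    congr 1
    simp [Complex.star_def, Complex.conj_ofReal]
  rw [traceNorm_eq_of_sq_eq (posSemidef_real_smul hS hc) h, trace_smul]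
  show ((c:ℂ) * _).re = _
  simp [traceNorm_eq_sqrt A]

lemma traceNorm_neg (A : Matrix n n ℂ) : traceNorm (-A) = traceNorm A := by
  have h := posSemidef_conjTranspose_mul_self A
  open scoped MatrixOrder in
  rw [traceNorm_eq_of_sq_eq (CFC.sqrt_nonneg (Aᴴ * A)).posSemidef
    (by rw [CFC.sq_sqrt _ h.nonneg]; simp), traceNorm_eq_sqrt A]

lemma conj_diag_mul {U : Matrix n n ℂ} (hU : star U * U = 1) (f g : n → ℂ) :
    (U * diagonal f * star U) * (U * diagonal g * star U) =
      U * diagonal (fun i => f i * g i) * star U := by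
  have h : diagonal f * diagonal g = diagonal (fun i => f i * g i) := by
    rw [diagonal_mul_diagonal]
  simp only [mul_assoc]
  rw [← mul_assoc (star U) U, hU, one_mul, ← mul_assoc (diagonal f) (diagonal g), h]

lemma trace_conj_diag {U : Matrix n n ℂ} (hU : star U * U = 1) (f : n → ℂ) :
    trace (U * diagonal f * star U) = ∑ i, f i := by
  rw [trace_mul_cycle, hU, one_mul, trace_diagonal]

lemma posSemidef_conj_diag {U : Matrix n n ℂ} (f : n → ℝ) (hf : ∀ i, 0 ≤ f i) :
    (U * diagonal (fun i => ((f i : ℝ) : ℂ)) * star U).PosSemidef := by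
  rw [star_eq_conjTranspose]
  exact (posSemidef_diagonal_iff.mpr fun i =>
    (Complex.zero_le_real).mpr (hf i)).mul_mul_conjTranspose_same U

lemma traceNorm_isHermitian {H : Matrix n n ℂ} (hH : H.IsHermitian) :
    traceNorm H = ∑ i, |hH.eigenvalues i| := by
  have hU : star (hH.eigenvectorUnitary : Matrix n n ℂ) * (hH.eigenvectorUnitary : Matrix n n ℂ) = 1 :=
    mem_unitaryGroup_iff'.mp hH.eigenvectorUnitary.2
  have hB : ((hH.eigenvectorUnitary : Matrix n n ℂ) *
      diagonal (fun i => ((|hH.eigenvalues i| : ℝ) : ℂ)) *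
      star (hH.eigenvectorUnitary : Matrix n n ℂ)).PosSemidef :=
    posSemidef_conj_diag _ fun i => abs_nonneg _
  have hB2 : ((hH.eigenvectorUnitary : Matrix n n ℂ) *
      diagonal (fun i => ((|hH.eigenvalues i| : ℝ) : ℂ)) *
      star (hH.eigenvectorUnitary : Matrix n n ℂ)) ^ 2 = Hᴴ * H := by
    rw [hH.eq, pow_two, conj_diag_mul hU]
    conv_rhs => rw [hH.spectral_theorem, Unitary.conjStarAlgAut_apply]
    have hd : (RCLike.ofReal ∘ hH.eigenvalues : n → ℂ) = fun i => ((hH.eigenvalues i : ℝ) : ℂ) := rfl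
    rw [hd, conj_diag_mul hU]
    have he : (fun i => ((|hH.eigenvalues i| : ℝ) : ℂ) * ((|hH.eigenvalues i| : ℝ) : ℂ)) =
        fun i => ((hH.eigenvalues i : ℝ) : ℂ) * ((hH.eigenvalues i : ℝ) : ℂ) := by
      funext i
      rw [← Complex.ofReal_mul, ← Complex.ofReal_mul, abs_mul_abs_self]
    rw [he]
  rw [traceNorm_eq_of_sq_eq hB hB2, trace_conj_diag hU, Complex.re_sum]
  simp

lemma conj_apply_diag (P U : Matrix n n ℂ) (i : n) :
    (star U * P * U) i i = star (fun k => U k i) ⬝ᵥ (P *ᵥ fun k => U k i) := by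
  simp only [Matrix.mul_apply, Matrix.star_apply, dotProduct, Matrix.mulVec, Pi.star_apply,
    Finset.sum_mul, Finset.mul_sum]
  rw [Finset.sum_comm]
  apply Finset.sum_congr rfl
  intro j _
  apply Finset.sum_congr rfl
  intro k _
  ring

lemma re_trace_mul_le {A : Matrix n n ℂ} (hA : A.IsHermitian) {P : Matrix n n ℂ}
    (hP : ∀ x : n → ℂ, |(star x ⬝ᵥ (P *ᵥ x)).re| ≤ (star x ⬝ᵥ x).re) :
    (trace (P * A)).re ≤ traceNorm A := by
  have hU : star (hA.eigenvectorUnitary : Matrix n n ℂ) * (hA.eigenvectorUnitary : Matrix n n ℂ) = 1 :=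
    mem_unitaryGroup_iff'.mp hA.eigenvectorUnitary.2
  have h1 : trace (P * A) = trace ((star (hA.eigenvectorUnitary : Matrix n n ℂ) * P *
      (hA.eigenvectorUnitary : Matrix n n ℂ)) * diagonal (fun i => ((hA.eigenvalues i : ℝ) : ℂ))) := by
    conv_lhs => rw [hA.spectral_theorem, Unitary.conjStarAlgAut_apply]
    have hd : (RCLike.ofReal ∘ hA.eigenvalues : n → ℂ) = fun i => ((hA.eigenvalues i : ℝ) : ℂ) := rfl
    rw [hd]
    rw [show P * ((hA.eigenvectorUnitary : Matrix n n ℂ) * diagonal (fun i => ((hA.eigenvalues i : ℝ) : ℂ)) *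
        star (hA.eigenvectorUnitary : Matrix n n ℂ)) =
      (P * (hA.eigenvectorUnitary : Matrix n n ℂ)) * diagonal (fun i => ((hA.eigenvalues i : ℝ) : ℂ)) *
        star (hA.eigenvectorUnitary : Matrix n n ℂ) from by simp only [mul_assoc]]
    rw [trace_mul_cycle]
    simp only [mul_assoc]
  have h2 : (trace (P * A)).re = ∑ i, hA.eigenvalues i *
      ((star (hA.eigenvectorUnitary : Matrix n n ℂ) * P * (hA.eigenvectorUnitary : Matrix n n ℂ)) i i).re := by
    rw [h1, trace, Complex.re_sum]
    apply Finset.sum_congr rfl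
    intro i _
    rw [Matrix.diag_apply, Matrix.mul_diagonal]
    simp [Complex.mul_re]
    ring
  rw [h2, traceNorm_isHermitian hA]
  apply Finset.sum_le_sum
  intro i _
  have hcol : (star (fun k => (hA.eigenvectorUnitary : Matrix n n ℂ) k i) ⬝ᵥ
      (fun k => (hA.eigenvectorUnitary : Matrix n n ℂ) k i) : ℂ) = 1 := by
    have := congrFun (congrFun hU i) i
    simpa [Matrix.mul_apply, dotProduct, Matrix.star_apply, Matrix.one_apply] using this
  have hb : |((star (hA.eigenvectorUnitary : Matrix n n ℂ) * P *
      (hA.eigenvectorUnitary : Matrix n n ℂ)) i i).re| ≤ 1 := by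
    rw [conj_apply_diag]
    calc _ ≤ (star (fun k => (hA.eigenvectorUnitary : Matrix n n ℂ) k i) ⬝ᵥ
        (fun k => (hA.eigenvectorUnitary : Matrix n n ℂ) k i) : ℂ).re := hP _
    _ = 1 := by rw [hcol]; simp
  calc hA.eigenvalues i * _ ≤ |hA.eigenvalues i * _| := le_abs_self _
  _ = |hA.eigenvalues i| * |_| := abs_mul _ _
  _ ≤ |hA.eigenvalues i| * 1 := by
      exact mul_le_mul_of_nonneg_left hb (abs_nonneg _)
  _ = |hA.eigenvalues i| := mul_one _

lemma traceNorm_add_le {A B : Matrix n n ℂ} (hA : A.IsHermitian) (hB : B.IsHermitian) :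
    traceNorm (A + B) ≤ traceNorm A + traceNorm B := by
  have hH : (A + B).IsHermitian := hA.add hB
  have hU : star (hH.eigenvectorUnitary : Matrix n n ℂ) * (hH.eigenvectorUnitary : Matrix n n ℂ) = 1 :=
    mem_unitaryGroup_iff'.mp hH.eigenvectorUnitary.2
  have hU2 : (hH.eigenvectorUnitary : Matrix n n ℂ) * star (hH.eigenvectorUnitary : Matrix n n ℂ) = 1 :=
    mem_unitaryGroup_iff.mp hH.eigenvectorUnitary.2
  set s : n → ℝ := fun i => if hH.eigenvalues i < 0 then -1 else 1 with hs
  set P : Matrix n n ℂ := (hH.eigenvectorUnitary : Matrix n n ℂ) * diagonal (fun i => ((s i : ℝ) : ℂ)) *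
    star (hH.eigenvectorUnitary : Matrix n n ℂ) with hPdef
  have hone : (1 : Matrix n n ℂ) = (hH.eigenvectorUnitary : Matrix n n ℂ) *
      diagonal (fun _ => ((1 : ℝ) : ℂ)) * star (hH.eigenvectorUnitary : Matrix n n ℂ) := by
    have : diagonal (fun _ : n => ((1 : ℝ) : ℂ)) = 1 := by simp
    rw [this, mul_one, hU2]
  have hsub : ((1 : Matrix n n ℂ) - P).PosSemidef := by
    have he : (1 : Matrix n n ℂ) - P = (hH.eigenvectorUnitary : Matrix n n ℂ) *
        diagonal (fun i => ((1 - s i : ℝ) : ℂ)) * star (hH.eigenvectorUnitary : Matrix n n ℂ) := by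
      conv_lhs => rw [hone, hPdef]
      rw [← sub_mul, ← mul_sub, diagonal_sub]
      congr 2
      funext i
      push_cast
      ring
    rw [he]
    exact posSemidef_conj_diag _ fun i => by rw [hs]; dsimp only; split <;> norm_num
  have hadd : ((1 : Matrix n n ℂ) + P).PosSemidef := by
    have he : (1 : Matrix n n ℂ) + P = (hH.eigenvectorUnitary : Matrix n n ℂ) *
        diagonal (fun i => ((1 + s i : ℝ) : ℂ)) * star (hH.eigenvectorUnitary : Matrix n n ℂ) := by
      conv_lhs => rw [hone, hPdef]
      rw [← add_mul, ← mul_add, diagonal_add]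
      congr 2
      funext i
      push_cast
      ring
    rw [he]
    exact posSemidef_conj_diag _ fun i => by rw [hs]; dsimp only; split <;> norm_num
  have hP : ∀ x : n → ℂ, |(star x ⬝ᵥ (P *ᵥ x)).re| ≤ (star x ⬝ᵥ x).re := by
    intro x
    have h1 := hsub.re_dotProduct_nonneg x
    have h2 := hadd.re_dotProduct_nonneg x
    rw [sub_mulVec, one_mulVec, dotProduct_sub] at h1
    rw [add_mulVec, one_mulVec, dotProduct_add] at h2
    simp only [RCLike.re_to_complex, Complex.sub_re] at h1
    simp only [RCLike.re_to_complex, Complex.add_re] at h2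
    rw [abs_le]
    constructor <;> linarith
  have key : (trace (P * (A + B))).re = ∑ i, |hH.eigenvalues i| := by
    conv_lhs => rw [hH.spectral_theorem, Unitary.conjStarAlgAut_apply]
    have hd : (RCLike.ofReal ∘ hH.eigenvalues : n → ℂ) = fun i => ((hH.eigenvalues i : ℝ) : ℂ) := rfl
    rw [hd, hPdef, conj_diag_mul hU]
    have he : (fun i => ((s i : ℝ) : ℂ) * ((hH.eigenvalues i : ℝ) : ℂ)) =
        fun i => ((|hH.eigenvalues i| : ℝ) : ℂ) := by
      funext i
      rw [← Complex.ofReal_mul]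
      congr 1
      rw [hs]
      dsimp only
      rcases lt_or_ge (hH.eigenvalues i) 0 with h | h
      · rw [if_pos h, abs_of_neg h]; ring
      · rw [if_neg (not_lt.mpr h), abs_of_nonneg h]; ring
    rw [he, trace_conj_diag hU, Complex.re_sum]
    simp
  have hsplit : (trace (P * (A + B))).re = (trace (P * A)).re + (trace (P * B)).re := by
    rw [mul_add, trace_add, Complex.add_re]
  rw [traceNorm_isHermitian hH, ← key, hsplit]
  exact add_le_add (re_trace_mul_le hA hP) (re_trace_mul_le hB hP)

lemma real_smul_matrix (r : ℝ) (A : Matrix n n ℂ) : r • A = (r : ℂ) • A := by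
  ext i j
  simp [Complex.real_smul]

lemma isHermitian_real_smul (r : ℝ) {A : Matrix n n ℂ} (hA : A.IsHermitian) :
    ((r : ℂ) • A).IsHermitian := by
  show _ᴴ = _
  rw [conjTranspose_smul, hA.eq]
  congr 1
  simp [Complex.star_def, Complex.conj_ofReal]


theorem stmt8 {d : ℕ} (hd : 1 ≤ d)
    (ρ₁ ρ₂ : Matrix (Fin d) (Fin d) ℂ)
    (hρ₁ : IsDensityMatrix ρ₁) (hρ₂ : IsDensityMatrix ρ₂)
    (p₁ p₂ : ℝ) (hp₁ : 0 ≤ p₁) (hp₂ : 0 ≤ p₂) (hp : p₁ + p₂ = 1)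
    (R₁ : ℝ) (hR₁ : 0 ≤ R₁)
    (σ₁ : Matrix (Fin d) (Fin d) ℂ)
    (hσ₁ : σ₁ = ((1 + R₁)⁻¹ : ℝ) • (ρ₁ + ((R₁ / d : ℝ)) • (1 : Matrix (Fin d) (Fin d) ℂ))) :
    traceNorm (p₁ • ρ₁ - p₂ • ρ₂) - traceNorm (p₁ • σ₁ - p₂ • ρ₂) ≥
        (R₁ / (1 + R₁)) * (traceNorm (p₁ • ρ₁ - p₂ • ρ₂) - 1) ∧
      (1 + traceNorm (p₁ • ρ₁ - p₂ • ρ₂)) / 2 - (1 + traceNorm (p₁ • σ₁ - p₂ • ρ₂)) / 2 ≥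
        (R₁ / 2) * (1 + R₁)⁻¹ * (traceNorm (p₁ • ρ₁ - p₂ • ρ₂) - 1) := by
  have hR : (0:ℝ) < 1 + R₁ := by linarith
  have hdr : (0:ℝ) < (d : ℝ) := by exact_mod_cast Nat.lt_of_lt_of_le Nat.zero_lt_one hd
  have hdc : ((d : ℝ) : ℂ) ≠ 0 := by exact_mod_cast hdr.ne'
  have hRc : ((1 + R₁ : ℝ) : ℂ) ≠ 0 := by exact_mod_cast hR.ne'
  -- abbreviations
  set X : Matrix (Fin d) (Fin d) ℂ := (p₁ : ℂ) • ρ₁ - (p₂ : ℂ) • ρ₂ with hX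
  set Y : Matrix (Fin d) (Fin d) ℂ :=
    ((p₁ / d : ℝ) : ℂ) • (1 : Matrix (Fin d) (Fin d) ℂ) - (p₂ : ℂ) • ρ₂ with hY
  have hXh : X.IsHermitian :=
    (isHermitian_real_smul p₁ hρ₁.1.isHermitian).sub (isHermitian_real_smul p₂ hρ₂.1.isHermitian)
  have hYh : Y.IsHermitian :=
    (isHermitian_real_smul _ isHermitian_one).sub (isHermitian_real_smul p₂ hρ₂.1.isHermitian)
  -- decomposition of the perturbed matrix
  have hM : p₁ • σ₁ - p₂ • ρ₂ =
      (((1 + R₁)⁻¹ : ℝ) : ℂ) • X + ((R₁ / (1 + R₁) : ℝ) : ℂ) • Y := by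
    rw [hσ₁, hX, hY, real_smul_matrix, real_smul_matrix, real_smul_matrix]
    ext i j
    simp only [Matrix.add_apply, Matrix.sub_apply, Matrix.smul_apply, Matrix.one_apply,
      smul_eq_mul]
    push_cast
    by_cases h : i = j <;> simp [h] <;> field_simp <;> ring
  -- trace norms of the pieces
  have hY1 : traceNorm (((p₁ / d : ℝ) : ℂ) • (1 : Matrix (Fin d) (Fin d) ℂ)) = p₁ := by
    rw [traceNorm_of_posSemidef (posSemidef_real_smul Matrix.PosSemidef.one
      (by positivity : (0:ℝ) ≤ p₁ / d))]
    rw [trace_smul, trace_one]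
    simp only [smul_eq_mul]
    rw [show ((p₁ / d : ℝ) : ℂ) * (Fintype.card (Fin d) : ℂ) = (((p₁ / d) * d : ℝ) : ℂ) by
      push_cast [Fintype.card_fin]; ring]
    rw [Complex.ofReal_re, div_mul_cancel₀ _ hdr.ne']
  have hY2 : traceNorm ((p₂ : ℂ) • ρ₂) = p₂ := by
    rw [traceNorm_of_posSemidef (posSemidef_real_smul hρ₂.1 hp₂), trace_smul, hρ₂.2]
    simp
  have hYle : traceNorm Y ≤ 1 := by
    have h1 : traceNorm Y ≤ traceNorm (((p₁ / d : ℝ) : ℂ) • (1 : Matrix (Fin d) (Fin d) ℂ)) +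
        traceNorm (-((p₂ : ℂ) • ρ₂)) := by
      rw [hY, sub_eq_add_neg]
      exact traceNorm_add_le (isHermitian_real_smul _ isHermitian_one)
        ((isHermitian_real_smul p₂ hρ₂.1.isHermitian).neg)
    rw [traceNorm_neg, hY1, hY2] at h1
    linarith
  -- main bound
  set T : ℝ := traceNorm X with hT
  have hMle : traceNorm (p₁ • σ₁ - p₂ • ρ₂) ≤ (1 + R₁)⁻¹ * (T + R₁) := by
    rw [hM]
    calc traceNorm ((((1 + R₁)⁻¹ : ℝ) : ℂ) • X + ((R₁ / (1 + R₁) : ℝ) : ℂ) • Y)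
        ≤ traceNorm ((((1 + R₁)⁻¹ : ℝ) : ℂ) • X) + traceNorm (((R₁ / (1 + R₁) : ℝ) : ℂ) • Y) :=
          traceNorm_add_le (isHermitian_real_smul _ hXh) (isHermitian_real_smul _ hYh)
      _ = (1 + R₁)⁻¹ * T + (R₁ / (1 + R₁)) * traceNorm Y := by
          rw [traceNorm_smul _ (by positivity), traceNorm_smul _ (by positivity)]
      _ ≤ (1 + R₁)⁻¹ * T + (R₁ / (1 + R₁)) * 1 := by
          have : (0:ℝ) ≤ R₁ / (1 + R₁) := by positivity
          nlinarith [hYle]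
      _ = (1 + R₁)⁻¹ * (T + R₁) := by field_simp
  have hTgoal : traceNorm (p₁ • ρ₁ - p₂ • ρ₂) = T := by
    rw [hT, hX, real_smul_matrix, real_smul_matrix]
  have key : T - traceNorm (p₁ • σ₁ - p₂ • ρ₂) ≥ (R₁ / (1 + R₁)) * (T - 1) := by
    have heq : T - (1 + R₁)⁻¹ * (T + R₁) = (R₁ / (1 + R₁)) * (T - 1) := by
      field_simp
      ring
    linarith
  constructor
  · rw [hTgoal]; exact key
  · rw [hTgoal]
    have h2 : (R₁ / 2) * (1 + R₁)⁻¹ * (T - 1) = ((R₁ / (1 + R₁)) * (T - 1)) / 2 := by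
      ring
    linarith
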